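/- Fix 0 ≤ c < b ≤ 1 and define f(t) = ρ(t,b,c). Then f(0) = ζ_b(b)/ζ_c(c), f(b) = 0, f(1) = (1-b)/(1-c), f(t) → +∞ as t → c, f is continuous on [0,c) and (c,1], strictly increasing on (0,c) and on (b,1), and strictly decreasing on (c,b). -/

import Mathlib

noncomputable def zeta (t s : ℝ) : ℝ := s + (1 - t) * Real.log (1 - s)
noncomputable def xi (s t : ℝ) : ℝ := zeta t t - zeta t s
noncomputable def rho (a b c : ℝ) : ℝ := if a < 1 then xi a b / xi a c else (1 - b) / (1 - c)

open Real Set Filter Topology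

set_option linter.unusedVariables false

lemma xi_eq (a t : ℝ) : xi a t = (t - a) + (1 - t) * (Real.log (1 - t) - Real.log (1 - a)) := by
  unfold xi zeta; ring

lemma xi_pos {x y : ℝ} (hx : x < 1) (hy : y ≤ 1) (hne : x ≠ y) : 0 < xi x y := by
  rcases eq_or_lt_of_le hy with h1 | h1
  · subst h1
    rw [xi_eq]
    simp
    linarith
  · have h0y : 0 < 1 - y := by linarith
    have h0x : 0 < 1 - x := by linarith
    have hrpos : 0 < (1-x)/(1-y) := div_pos h0x h0y
    have hrne : (1-x)/(1-y) ≠ 1 := by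
      intro h
      rw [div_eq_one_iff_eq h0y.ne'] at h
      exact hne (by linarith)
    have h2 := Real.log_lt_sub_one_of_pos hrpos hrne
    rw [Real.log_div h0x.ne' h0y.ne'] at h2
    have h3 : (1-y) * (Real.log (1-x) - Real.log (1-y)) < (1-y)*((1-x)/(1-y) - 1) :=
      (mul_lt_mul_iff_right₀ h0y).2 h2
    have h4 : (1-y)*((1-x)/(1-y) - 1) = y - x := by field_simp; ring
    rw [xi_eq]
    nlinarith [h3]

lemma xi_hasDeriv (y : ℝ) {x : ℝ} (hx : x < 1) :
    HasDerivAt (fun t => xi t y) ((x - y)/(1-x)) x := by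
  have hne : (1:ℝ) - x ≠ 0 := by intro h; linarith
  have h1 : HasDerivAt (fun t : ℝ => 1 - t) (-1) x := (hasDerivAt_id x).const_sub 1
  have h2 : HasDerivAt (fun t => Real.log (1 - t)) (-1/(1-x)) x := h1.log hne
  have h3 : HasDerivAt (fun t => zeta y y - (t + (1 - y) * Real.log (1 - t)))
      (-(1 + (1-y) * (-1/(1-x)))) x :=
    (((hasDerivAt_id x).add (h2.const_mul (1-y))).const_sub (zeta y y))
  have h4 : (fun t => xi t y) = (fun t => zeta y y - (t + (1 - y) * Real.log (1 - t))) := by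
    funext t; unfold xi zeta; ring
  rw [h4]
  convert h3 using 1
  field_simp
  ring

noncomputable def Wf (b c t : ℝ) : ℝ :=
  (1-c)*(t-b)*(Real.log (1-c) - Real.log (1-t)) - (1-b)*(t-c)*(Real.log (1-b) - Real.log (1-t))

noncomputable def W1 (b c t : ℝ) : ℝ :=
  (1-c)*(Real.log (1-c) - Real.log (1-t)) - (1-b)*(Real.log (1-b) - Real.log (1-t)) - (b-c)

lemma W_hasDeriv1 (b c : ℝ) {x : ℝ} (hx : x < 1) :
    HasDerivAt (Wf b c) (W1 b c x) x := by
  have hne : (1:ℝ) - x ≠ 0 := by intro h; linarith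
  have h2 : HasDerivAt (fun t => Real.log (1 - t)) (-1/(1-x)) x :=
    ((hasDerivAt_id x).const_sub 1).log hne
  have hlc : HasDerivAt (fun t => Real.log (1-c) - Real.log (1-t)) (-(-1/(1-x))) x :=
    h2.const_sub _
  have hlb : HasDerivAt (fun t => Real.log (1-b) - Real.log (1-t)) (-(-1/(1-x))) x :=
    h2.const_sub _
  have htb : HasDerivAt (fun t : ℝ => t - b) 1 x := (hasDerivAt_id x).sub_const b
  have htc : HasDerivAt (fun t : ℝ => t - c) 1 x := (hasDerivAt_id x).sub_const c
  have hA : HasDerivAt (fun t => (t-b)*(Real.log (1-c) - Real.log (1-t)))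
      (1 * (Real.log (1-c) - Real.log (1-x)) + (x-b) * (-(-1/(1-x)))) x := htb.mul hlc
  have hB : HasDerivAt (fun t => (t-c)*(Real.log (1-b) - Real.log (1-t)))
      (1 * (Real.log (1-b) - Real.log (1-x)) + (x-c) * (-(-1/(1-x)))) x := htc.mul hlb
  have h := (hA.const_mul (1-c)).sub (hB.const_mul (1-b))
  have heq : (fun t => (1-c)*((t-b)*(Real.log (1-c) - Real.log (1-t)))
      - (1-b)*((t-c)*(Real.log (1-b) - Real.log (1-t)))) = Wf b c := by
    funext t; unfold Wf; ring
  simp only [Pi.sub_def] at h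
  rw [heq] at h
  refine h.congr_deriv ?_
  unfold W1
  field_simp
  ring

lemma W_hasDeriv2 (b c : ℝ) {x : ℝ} (hx : x < 1) :
    HasDerivAt (W1 b c) ((b-c)/(1-x)) x := by
  have hne : (1:ℝ) - x ≠ 0 := by intro h; linarith
  have h2 : HasDerivAt (fun t => Real.log (1 - t)) (-1/(1-x)) x :=
    ((hasDerivAt_id x).const_sub 1).log hne
  have hlc : HasDerivAt (fun t => Real.log (1-c) - Real.log (1-t)) (-(-1/(1-x))) x :=
    h2.const_sub _
  have hlb : HasDerivAt (fun t => Real.log (1-b) - Real.log (1-t)) (-(-1/(1-x))) x :=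
    h2.const_sub _
  have h := ((hlc.const_mul (1-c)).sub (hlb.const_mul (1-b))).sub_const (b - c)
  have heq : (fun t => (1-c)*(Real.log (1-c) - Real.log (1-t))
      - (1-b)*(Real.log (1-b) - Real.log (1-t)) - (b-c)) = W1 b c := by
    funext t; unfold W1; ring
  simp only [Pi.sub_apply] at h
  rw [heq] at h
  refine h.congr_deriv ?_
  field_simp
  ring

lemma W_convex {b c : ℝ} (hcb : c < b) : StrictConvexOn ℝ (Iio 1) (Wf b c) := by
  apply strictConvexOn_of_deriv2_pos (convex_Iio 1)
  · intro x hx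
    exact ((W_hasDeriv1 b c hx).differentiableAt.continuousAt).continuousWithinAt
  · intro x hx
    rw [interior_Iio] at hx
    have hx' : x < 1 := hx
    have hev : deriv (Wf b c) =ᶠ[nhds x] W1 b c := by
      filter_upwards [Iio_mem_nhds hx'] with t ht
      exact (W_hasDeriv1 b c ht).deriv
    show 0 < deriv (deriv (Wf b c)) x
    rw [hev.deriv_eq, (W_hasDeriv2 b c hx').deriv]
    exact div_pos (by linarith) (by linarith)

lemma W_at_c (b c : ℝ) : Wf b c c = 0 := by unfold Wf; simp

lemma W_at_b (b c : ℝ) : Wf b c b = 0 := by unfold Wf; simp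

lemma W_id (b c x : ℝ) : Wf b c x = (x-b) * xi x c - (x-c) * xi x b := by
  rw [xi_eq, xi_eq]; unfold Wf; ring

lemma W_neg {b c : ℝ} (hc : 0 ≤ c) (hcb : c < b) (hb : b ≤ 1) :
    ∀ t ∈ Ioo c b, Wf b c t < 0 := by
  intro t ht
  obtain ⟨ht1, ht2⟩ := ht
  have htlt1 : t < 1 := lt_of_lt_of_le ht2 hb
  rcases eq_or_lt_of_le hb with h1 | h1
  · subst h1
    have hlog : Real.log (1-t) < Real.log (1-c) :=
      Real.log_lt_log (by linarith) (by linarith)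
    have h2 : 0 < (1-c) * (Real.log (1-c) - Real.log (1-t)) :=
      mul_pos (by linarith) (by linarith)
    unfold Wf
    nlinarith [h2]
  · have hW := (W_convex hcb).2
    have hcI : c ∈ Iio (1:ℝ) := by simp; linarith
    have hbI : b ∈ Iio (1:ℝ) := h1
    have hbc : 0 < b - c := by linarith
    have key := hW hcI hbI (ne_of_lt hcb)
      (show 0 < (b-t)/(b-c) from div_pos (by linarith) hbc)
      (show 0 < (t-c)/(b-c) from div_pos (by linarith) hbc)
      (by field_simp; ring)
    simp only [smul_eq_mul] at key
    rw [W_at_c, W_at_b] at key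
    have hcomb : (b-t)/(b-c) * c + (t-c)/(b-c) * b = t := by field_simp; ring
    rw [hcomb] at key
    linarith [key]

lemma W_pos_lo {b c : ℝ} (hc : 0 ≤ c) (hcb : c < b) (hb : b ≤ 1) :
    ∀ t ∈ Ioo 0 c, 0 < Wf b c t := by
  intro t ht
  obtain ⟨ht1, ht2⟩ := ht
  have htlt1 : t < 1 := by linarith
  rcases eq_or_lt_of_le hb with h1 | h1
  · subst h1
    have hlog : Real.log (1-c) < Real.log (1-t) :=
      Real.log_lt_log (by linarith) (by linarith)
    have h2 : 0 < (1-c) * (Real.log (1-t) - Real.log (1-c)) :=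
      mul_pos (by linarith) (by linarith)
    unfold Wf
    nlinarith [h2]
  · have hW := (W_convex hcb).2
    have htI : t ∈ Iio (1:ℝ) := htlt1
    have hbI : b ∈ Iio (1:ℝ) := h1
    have hbt : 0 < b - t := by linarith
    have key := hW htI hbI (by intro h; rw [h] at ht2; linarith)
      (show 0 < (b-c)/(b-t) from div_pos (by linarith) hbt)
      (show 0 < (c-t)/(b-t) from div_pos (by linarith) hbt)
      (by field_simp; ring)
    simp only [smul_eq_mul] at key
    rw [W_at_b] at key
    have hcomb : (b-c)/(b-t) * t + (c-t)/(b-t) * b = c := by field_simp; ring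
    rw [hcomb, W_at_c] at key
    have ha : 0 < (b-c)/(b-t) := div_pos (by linarith) hbt
    nlinarith [key, ha]

lemma W_pos_hi {b c : ℝ} (hc : 0 ≤ c) (hcb : c < b) (hb : b ≤ 1) :
    ∀ t ∈ Ioo b 1, 0 < Wf b c t := by
  intro t ht
  obtain ⟨ht1, ht2⟩ := ht
  have hW := (W_convex hcb).2
  have htI : t ∈ Iio (1:ℝ) := ht2
  have hcI : c ∈ Iio (1:ℝ) := by simp; linarith
  have htc : 0 < t - c := by linarith
  have key := hW hcI htI (by intro h; subst h; linarith)
    (show 0 < (t-b)/(t-c) from div_pos (by linarith) htc)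
    (show 0 < (b-c)/(t-c) from div_pos (by linarith) htc)
    (by field_simp; ring)
  simp only [smul_eq_mul] at key
  rw [W_at_c] at key
  have hcomb : (t-b)/(t-c) * c + (b-c)/(t-c) * t = b := by field_simp; ring
  rw [hcomb, W_at_b] at key
  have ha : 0 < (b-c)/(t-c) := div_pos (by linarith) htc
  nlinarith [key, ha]

lemma rho_ev {b c x : ℝ} (hx : x < 1) :
    (fun t => rho t b c) =ᶠ[nhds x] (fun t => xi t b / xi t c) := by
  filter_upwards [Iio_mem_nhds hx] with t ht
  simp only [rho, if_pos (show t < 1 from ht)]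

lemma rho_hasDeriv {b c x : ℝ} (hx : x < 1) (hD : xi x c ≠ 0) :
    HasDerivAt (fun t => xi t b / xi t c)
      (Wf b c x / ((1-x) * (xi x c)^2)) x := by
  have hne : (1:ℝ) - x ≠ 0 := by intro h; linarith
  have h := (xi_hasDeriv b hx).div (xi_hasDeriv c hx) hD
  refine h.congr_deriv ?_
  rw [W_id]
  field_simp

lemma rho_deriv {b c x : ℝ} (hx : x < 1) (hD : xi x c ≠ 0) :
    deriv (fun t => rho t b c) x = Wf b c x / ((1-x) * (xi x c)^2) := by
  rw [(rho_ev hx).deriv_eq, (rho_hasDeriv hx hD).deriv]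

lemma rho_contAt {b c x : ℝ} (hx : x < 1) (hD : xi x c ≠ 0) :
    ContinuousAt (fun t => rho t b c) x :=
  ((rho_hasDeriv hx hD).differentiableAt.continuousAt).congr (rho_ev hx).symm

lemma part4 (b c : ℝ) (hc : 0 ≤ c) (hcb : c < b) (hb : b ≤ 1) :
    Filter.Tendsto (fun t => rho t b c) (nhdsWithin c (Set.Icc 0 1 \ {c})) Filter.atTop := by
  have hc1 : c < 1 := lt_of_lt_of_le hcb hb
  set F := nhdsWithin c (Set.Icc 0 1 \ {c}) with hF
  have hev1 : ∀ᶠ t in F, t < 1 := nhdsWithin_le_nhds (Iio_mem_nhds hc1)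
  have hevS : ∀ᶠ t in F, t ∈ Set.Icc (0:ℝ) 1 \ {c} := eventually_mem_nhdsWithin
  have hNc : Tendsto (fun t => xi t b) F (𝓝 (xi c b)) :=
    ((xi_hasDeriv b hc1).differentiableAt.continuousAt.tendsto).mono_left nhdsWithin_le_nhds
  have hxibc : 0 < xi c b := xi_pos hc1 hb (ne_of_lt hcb)
  have hxicc : xi c c = 0 := by unfold xi; ring
  have hDc : Tendsto (fun t => xi t c) F (𝓝 0) := by
    have := ((xi_hasDeriv c hc1).differentiableAt.continuousAt.tendsto).mono_left
      (nhdsWithin_le_nhds (s := Set.Icc (0:ℝ) 1 \ {c}))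
    rwa [hxicc] at this
  have hDpos : ∀ᶠ t in F, 0 < xi t c := by
    filter_upwards [hev1, hevS] with t h1 h2
    exact xi_pos h1 (le_of_lt hc1) (by simpa using h2.2)
  have hD0 : Tendsto (fun t => xi t c) F (𝓝[>] 0) :=
    tendsto_nhdsWithin_iff.2 ⟨hDc, hDpos.mono fun t h => h⟩
  have hinv : Tendsto (fun t => (xi t c)⁻¹) F atTop := tendsto_inv_nhdsGT_zero.comp hD0
  have hmain : Tendsto (fun t => xi t b * (xi t c)⁻¹) F atTop :=
    Filter.Tendsto.pos_mul_atTop hxibc hNc hinv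
  apply hmain.congr'
  filter_upwards [hev1] with t ht
  simp only [rho, if_pos ht, div_eq_mul_inv]

lemma lim_aux (y c : ℝ) (hc : 0 ≤ c) (hc1 : c < 1) :
    Tendsto (fun t => xi t y * (-Real.log (1-t))⁻¹) (𝓝[Ioo c 1] 1) (𝓝 (1 - y)) := by
  set F := 𝓝[Ioo c 1] (1:ℝ) with hFdef
  have hA : Tendsto (fun t : ℝ => 1 - t) F (𝓝[>] 0) := by
    apply tendsto_nhdsWithin_iff.2
    constructor
    · have h1 : Tendsto (fun t : ℝ => 1 - t) (𝓝 1) (𝓝 0) := by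
        simpa using (continuous_sub_left (1:ℝ)).tendsto 1
      exact h1.mono_left nhdsWithin_le_nhds
    · filter_upwards [eventually_mem_nhdsWithin] with t ht
      exact sub_pos.2 ht.2
  have hlog : Tendsto (fun t : ℝ => Real.log (1-t)) F atBot :=
    Real.tendsto_log_nhdsGT_zero.comp hA
  have hl : Tendsto (fun t : ℝ => -Real.log (1-t)) F atTop :=
    tendsto_neg_atBot_atTop.comp hlog
  have hinv : Tendsto (fun t : ℝ => (-Real.log (1-t))⁻¹) F (𝓝 0) := hl.inv_tendsto_atTop
  have hev : ∀ᶠ t in F, -Real.log (1-t) ≠ 0 := by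
    filter_upwards [eventually_mem_nhdsWithin] with t ht
    have h1 : 0 < 1 - t := by linarith [ht.2]
    have h2 : 1 - t < 1 := by linarith [ht.1, hc]
    have h3 := Real.log_neg h1 h2
    intro h; rw [neg_eq_zero] at h; rw [h] at h3; linarith
  have h1 : Tendsto (fun t : ℝ => (y - t) + (1-y)*Real.log (1-y)) F
      (𝓝 ((y-1) + (1-y)*Real.log (1-y))) := by
    apply Tendsto.mono_left _ nhdsWithin_le_nhds
    have hcont : Continuous (fun t : ℝ => (y - t) + (1-y)*Real.log (1-y)) :=
      (continuous_sub_left y).add continuous_const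
    simpa using hcont.tendsto 1
  have h2 := h1.mul hinv
  rw [mul_zero] at h2
  have hgoal : Tendsto
      (fun t => ((y - t) + (1-y)*Real.log (1-y)) * (-Real.log (1-t))⁻¹ + (1-y)) F (𝓝 (1-y)) := by
    have h3 := h2.add_const (1-y)
    simpa using h3
  apply hgoal.congr'
  filter_upwards [hev] with t ht
  rw [xi_eq]
  linear_combination ((y:ℝ)-1) * mul_inv_cancel₀ ht

lemma part6_at1 (b c : ℝ) (hc : 0 ≤ c) (hcb : c < b) (hb : b ≤ 1) :
    Tendsto (fun t => rho t b c) (𝓝[Ioo c 1] 1) (𝓝 ((1-b)/(1-c))) := by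
  have hc1 : c < 1 := lt_of_lt_of_le hcb hb
  have hN := lim_aux b c hc hc1
  have hD := lim_aux c c hc hc1
  have hquot := hN.div hD (by intro h; rw [sub_eq_zero] at h; exact absurd h.symm (ne_of_lt hc1))
  apply hquot.congr'
  filter_upwards [eventually_mem_nhdsWithin] with t ht
  have ht1 : t < 1 := ht.2
  have h1 : 0 < 1 - t := by linarith
  have h2 : 1 - t < 1 := by linarith [ht.1, hc]
  have h3 := Real.log_neg h1 h2
  have hl : -Real.log (1-t) ≠ 0 := by intro h; rw [neg_eq_zero] at h; rw [h] at h3; linarith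
  have hD0 : xi t c ≠ 0 := (xi_pos ht1 (le_of_lt hc1) (ne_of_gt ht.1)).ne'
  simp only [Pi.div_apply, rho, if_pos ht1]
  rw [mul_div_mul_right _ _ (inv_ne_zero hl)]

theorem stmt7 (b c : ℝ) (hc : 0 ≤ c) (hcb : c < b) (hb : b ≤ 1) :
    rho 0 b c = zeta b b / zeta c c ∧
    rho b b c = 0 ∧
    rho 1 b c = (1 - b) / (1 - c) ∧
    Filter.Tendsto (fun t => rho t b c) (nhdsWithin c (Set.Icc 0 1 \ {c})) Filter.atTop ∧
    ContinuousOn (fun t => rho t b c) (Set.Ico 0 c) ∧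
    ContinuousOn (fun t => rho t b c) (Set.Ioc c 1) ∧
    StrictMonoOn (fun t => rho t b c) (Set.Ioo 0 c) ∧
    StrictMonoOn (fun t => rho t b c) (Set.Ioo b 1) ∧
    StrictAntiOn (fun t => rho t b c) (Set.Ioo c b) := by
  have hc1 : c < 1 := lt_of_lt_of_le hcb hb
  have hc1' : c ≤ 1 := le_of_lt hc1
  have Dpos : ∀ x : ℝ, x < 1 → x ≠ c → 0 < xi x c := fun x h1 h2 => xi_pos h1 hc1' h2
  refine ⟨?_, ?_, ?_, ?_, ?_, ?_, ?_, ?_, ?_⟩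
  · -- rho 0 = zeta b b / zeta c c
    norm_num [rho, xi, zeta]
  · -- rho b = 0
    rcases lt_or_eq_of_le hb with h1 | h1
    · simp [rho, if_pos h1, xi]
    · simp [rho, ← h1]
  · -- rho 1
    simp [rho]
  · -- tendsto at c
    exact part4 b c hc hcb hb
  · -- ContinuousOn Ico 0 c
    intro x hx
    exact (rho_contAt (by linarith [hx.2] : x < 1)
      (Dpos x (by linarith [hx.2]) (ne_of_lt hx.2)).ne').continuousWithinAt
  · -- ContinuousOn Ioc c 1
    intro x hx
    rcases lt_or_eq_of_le hx.2 with h1 | h1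
    · exact (rho_contAt h1 (Dpos x h1 (ne_of_gt hx.1)).ne').continuousWithinAt
    · subst h1
      rw [← continuousWithinAt_diff_self, Set.Ioc_sdiff_right]
      have e : rho 1 b c = (1-b)/(1-c) := by simp [rho]
      show Tendsto (fun t => rho t b c) (𝓝[Set.Ioo c 1] 1) (𝓝 (rho 1 b c))
      rw [e]
      exact part6_at1 b c hc hcb hb
  · -- StrictMonoOn Ioo 0 c
    apply strictMonoOn_of_deriv_pos (convex_Ioo 0 c)
    · intro x hx
      exact (rho_contAt (by linarith [hx.2] : x < 1)
        (Dpos x (by linarith [hx.2]) (ne_of_lt hx.2)).ne').continuousWithinAt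
    · intro x hx
      rw [interior_Ioo] at hx
      have hx1 : x < 1 := by linarith [hx.2]
      have hD := Dpos x hx1 (ne_of_lt hx.2)
      rw [rho_deriv hx1 hD.ne']
      exact div_pos (W_pos_lo hc hcb hb x hx)
        (mul_pos (by linarith) (pow_pos hD 2))
  · -- StrictMonoOn Ioo b 1
    apply strictMonoOn_of_deriv_pos (convex_Ioo b 1)
    · intro x hx
      exact (rho_contAt hx.2
        (Dpos x hx.2 (by intro h; rw [h] at hx; linarith [hx.1])).ne').continuousWithinAt
    · intro x hx
      rw [interior_Ioo] at hx
      have hD := Dpos x hx.2 (by intro h; rw [h] at hx; exact absurd hx.1 (by simp; linarith))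
      rw [rho_deriv hx.2 hD.ne']
      exact div_pos (W_pos_hi hc hcb hb x hx)
        (mul_pos (by linarith [hx.2]) (pow_pos hD 2))
  · -- StrictAntiOn Ioo c b
    apply strictAntiOn_of_deriv_neg (convex_Ioo c b)
    · intro x hx
      have hx1 : x < 1 := lt_of_lt_of_le hx.2 hb
      exact (rho_contAt hx1 (Dpos x hx1 (ne_of_gt hx.1)).ne').continuousWithinAt
    · intro x hx
      rw [interior_Ioo] at hx
      have hx1 : x < 1 := lt_of_lt_of_le hx.2 hb
      have hD := Dpos x hx1 (ne_of_gt hx.1)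
      rw [rho_deriv hx1 hD.ne']
      exact div_neg_of_neg_of_pos (W_neg hc hcb hb x hx)
        (mul_pos (by linarith) (pow_pos hD 2))
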